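/- Fix x ∈ ℝ^d with ‖x‖₂ ≤ 1 and S > 0, and define F(Θ) = σ(Θ x) for Θ ∈ ℝ^{K×d}, where σ : ℝ^K → Δ^{K+1}_{>0} is the softmax map σ(z)_k = e^{z_k}/(1 + Σ_{j=1}^K e^{z_j}) for k ∈ [K] and σ(z)_0 = 1/(1 + Σ_{j=1}^K e^{z_j}). Let S_set = { Θ ∈ ℝ^{K×d} : every row θ^{(k)} of Θ satisfies ‖θ^{(k)}‖₂ ≤ S }. Then the convex hull of F(S_set) is contained in F( { Θ ∈ ℝ^{K×d} : ‖Θ‖_F ≤ √K · S } ). -/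

import Mathlib

open scoped RealInnerProductSpace

/-- The softmax image `F(Θ) = σ(Θx) ∈ ℝ^{K+1}`:  coordinate `0` is
`1/(1 + Σ_j e^{⟨x, θ^{(j)}⟩})` and coordinate `k ∈ [K]` is
`e^{⟨x, θ^{(k)}⟩}/(1 + Σ_j e^{⟨x, θ^{(j)}⟩})`, where `Θ` has rows `θ^{(1)}, …, θ^{(K)}`. -/
noncomputable def softmaxF {K d : ℕ} (x : EuclideanSpace ℝ (Fin d))
    (Θ : Fin K → EuclideanSpace ℝ (Fin d)) : Fin (K + 1) → ℝ :=
  Fin.cons (1 / (1 + ∑ j, Real.exp ⟪x, Θ j⟫))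
    (fun k => Real.exp ⟪x, Θ k⟫ / (1 + ∑ j, Real.exp ⟪x, Θ j⟫))

/-- the convex hull of the softmax image of the set of matrices whose rows have
norm at most `S` is contained in the softmax image of the Frobenius ball of radius `√K S`. -/
theorem stmt_19 {K d : ℕ} (x : EuclideanSpace ℝ (Fin d)) (hx : ‖x‖ ≤ 1)
    (S : ℝ) (hS : 0 < S) :
    convexHull ℝ (softmaxF x '' {Θ : Fin K → EuclideanSpace ℝ (Fin d) | ∀ k, ‖Θ k‖ ≤ S}) ⊆
      softmaxF x '' {Θ : Fin K → EuclideanSpace ℝ (Fin d) | Real.sqrt (∑ k, ‖Θ k‖ ^ 2) ≤ Real.sqrt K * S} := by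
  set B : ℝ := S * ‖x‖ with hB
  have hB0 : 0 ≤ B := mul_nonneg hS.le (norm_nonneg x)
  set C : Set (Fin (K + 1) → ℝ) :=
    {p | (∀ i, 0 < p i) ∧ (∑ i, p i = 1) ∧
      ∀ k : Fin K, p k.succ ≤ Real.exp B * p 0 ∧ Real.exp (-B) * p 0 ≤ p k.succ} with hC
  -- C is convex
  have hCconv : Convex ℝ C := by
    intro p hp q hq a b ha hb hab
    obtain ⟨hp1, hp2, hp3⟩ := hp
    obtain ⟨hq1, hq2, hq3⟩ := hq
    refine ⟨fun i => ?_, ?_, fun k => ⟨?_, ?_⟩⟩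
    · rcases ha.lt_or_eq with h | h
      · have : 0 < a * p i := mul_pos h (hp1 i)
        have : 0 ≤ b * q i := mul_nonneg hb (hq1 i).le
        simp only [Pi.add_apply, Pi.smul_apply, smul_eq_mul]
        nlinarith [hp1 i, hq1 i]
      · have hb1 : b = 1 := by linarith
        simp only [Pi.add_apply, Pi.smul_apply, smul_eq_mul, ← h, hb1]
        simpa using hq1 i
    · simp only [Pi.add_apply, Pi.smul_apply, smul_eq_mul]
      rw [Finset.sum_add_distrib, ← Finset.mul_sum, ← Finset.mul_sum, hp2, hq2]
      linarith
    · have h1 := (hp3 k).1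
      have h2 := (hq3 k).1
      simp only [Pi.add_apply, Pi.smul_apply, smul_eq_mul]
      nlinarith [mul_le_mul_of_nonneg_left h1 ha, mul_le_mul_of_nonneg_left h2 hb]
    · have h1 := (hp3 k).2
      have h2 := (hq3 k).2
      simp only [Pi.add_apply, Pi.smul_apply, smul_eq_mul]
      nlinarith [mul_le_mul_of_nonneg_left h1 ha, mul_le_mul_of_nonneg_left h2 hb]
  -- the base set is contained in C
  have hsub : softmaxF x '' {Θ : Fin K → EuclideanSpace ℝ (Fin d) | ∀ k, ‖Θ k‖ ≤ S} ⊆ C := by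
    rintro _ ⟨Θ, hΘ, rfl⟩
    have hDpos : 0 < 1 + ∑ j, Real.exp ⟪x, Θ j⟫ := by
      have : 0 ≤ ∑ j, Real.exp ⟪x, Θ j⟫ :=
        Finset.sum_nonneg fun j _ => (Real.exp_pos _).le
      linarith
    have habs : ∀ k : Fin K, |⟪x, Θ k⟫| ≤ B := by
      intro k
      calc |⟪x, Θ k⟫| ≤ ‖x‖ * ‖Θ k‖ := abs_real_inner_le_norm x (Θ k)
        _ ≤ ‖x‖ * S := by
            exact mul_le_mul_of_nonneg_left (hΘ k) (norm_nonneg x)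
        _ = B := by rw [hB]; ring
    refine ⟨fun i => ?_, ?_, fun k => ⟨?_, ?_⟩⟩
    · induction i using Fin.cases with
      | zero =>
        simp only [softmaxF, Fin.cons_zero]
        exact div_pos one_pos hDpos
      | succ k =>
        simp only [softmaxF, Fin.cons_succ]
        exact div_pos (Real.exp_pos _) hDpos
    · rw [show (softmaxF x Θ) = Fin.cons (1 / (1 + ∑ j, Real.exp ⟪x, Θ j⟫))
        (fun k => Real.exp ⟪x, Θ k⟫ / (1 + ∑ j, Real.exp ⟪x, Θ j⟫)) from rfl,
        Fin.sum_cons, ← Finset.sum_div, ← add_div, div_self (ne_of_gt hDpos)]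
    · simp only [softmaxF, Fin.cons_succ, Fin.cons_zero]
      rw [mul_one_div]
      exact (div_le_div_iff_of_pos_right hDpos).2 (Real.exp_le_exp.2 ((abs_le.1 (habs k)).2))
    · simp only [softmaxF, Fin.cons_succ, Fin.cons_zero]
      rw [mul_one_div]
      exact (div_le_div_iff_of_pos_right hDpos).2 (Real.exp_le_exp.2 ((abs_le.1 (habs k)).1))
  -- C is contained in the target
  have htgt : C ⊆ softmaxF x '' {Θ : Fin K → EuclideanSpace ℝ (Fin d) |
      Real.sqrt (∑ k, ‖Θ k‖ ^ 2) ≤ Real.sqrt K * S} := by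
    rintro p ⟨hp1, hp2, hp3⟩
    set a : Fin K → ℝ := fun k => Real.log (p k.succ / p 0) with ha
    have hp00 : (0:ℝ) < p 0 := hp1 0
    have hexp : ∀ k, Real.exp (a k) = p k.succ / p 0 := fun k =>
      Real.exp_log (div_pos (hp1 k.succ) hp00)
    have haB : ∀ k, |a k| ≤ B := by
      intro k
      rw [abs_le]
      constructor
      · rw [← Real.exp_le_exp, hexp k, le_div_iff₀ hp00]
        have := (hp3 k).2; linarith [mul_comm (Real.exp (-B)) (p 0)]
      · rw [← Real.exp_le_exp, hexp k, div_le_iff₀ hp00]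
        have := (hp3 k).1; linarith [mul_comm (Real.exp B) (p 0)]
    set Θ' : Fin K → EuclideanSpace ℝ (Fin d) := fun k => (a k / ‖x‖ ^ 2) • x with hΘ'
    have hinner : ∀ k, ⟪x, Θ' k⟫ = a k := by
      intro k
      by_cases hx0 : x = 0
      · have hB0' : B = 0 := by rw [hB, hx0]; simp
        have hak : a k = 0 := by
          have := haB k; rw [hB0'] at this
          have : |a k| = 0 := le_antisymm this (abs_nonneg _)
          exact abs_eq_zero.1 this
        rw [hx0, hak]; simp
      · rw [hΘ', real_inner_smul_right, real_inner_self_eq_norm_sq]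
        exact div_mul_cancel₀ (a k) (pow_ne_zero 2 (norm_ne_zero_iff.2 hx0))
    have hnth : ∀ k, ‖Θ' k‖ ≤ S := by
      intro k
      by_cases hx0 : x = 0
      · rw [hΘ', hx0]; simpa using hS.le
      · have hxn : 0 < ‖x‖ := norm_pos_iff.2 hx0
        rw [hΘ', norm_smul]
        have : |a k| ≤ S * ‖x‖ := haB k
        rw [Real.norm_eq_abs, abs_div, abs_pow, abs_norm]
        rw [div_mul_eq_mul_div, div_le_iff₀ (by positivity)]
        calc |a k| * ‖x‖ ≤ (S * ‖x‖) * ‖x‖ :=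
              mul_le_mul_of_nonneg_right this (norm_nonneg x)
          _ = S * ‖x‖ ^ 2 := by ring
    refine ⟨Θ', ?_, ?_⟩
    · show Real.sqrt (∑ k, ‖Θ' k‖ ^ 2) ≤ Real.sqrt K * S
      have h1 : ∑ k, ‖Θ' k‖ ^ 2 ≤ (K : ℝ) * S ^ 2 := by
        calc ∑ k : Fin K, ‖Θ' k‖ ^ 2 ≤ ∑ _k : Fin K, S ^ 2 :=
              Finset.sum_le_sum fun k _ =>
                pow_le_pow_left₀ (norm_nonneg _) (hnth k) 2
          _ = (K : ℝ) * S ^ 2 := by simp [Finset.sum_const, mul_comm]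
      calc Real.sqrt (∑ k, ‖Θ' k‖ ^ 2) ≤ Real.sqrt ((K : ℝ) * S ^ 2) :=
            Real.sqrt_le_sqrt h1
        _ = Real.sqrt K * S := by
            rw [Real.sqrt_mul (Nat.cast_nonneg K), Real.sqrt_sq hS.le]
    · -- softmaxF x Θ' = p
      have hDen : 1 + ∑ j, Real.exp ⟪x, Θ' j⟫ = 1 / p 0 := by
        have : ∑ j, Real.exp ⟪x, Θ' j⟫ = ∑ j : Fin K, p j.succ / p 0 := by
          refine Finset.sum_congr rfl fun j _ => ?_
          rw [hinner j, hexp j]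
        rw [this, ← Finset.sum_div]
        have hsum : ∑ j : Fin K, p j.succ = 1 - p 0 := by
          have := hp2
          rw [Fin.sum_univ_succ] at this
          linarith
        rw [hsum]
        field_simp
        ring
      funext i
      induction i using Fin.cases with
      | zero =>
        simp only [softmaxF, Fin.cons_zero, hDen]
        field_simp
      | succ k =>
        simp only [softmaxF, Fin.cons_succ, hDen, hinner k, hexp k]
        field_simp
  exact fun p hp => htgt (convexHull_min hsub hCconv hp)
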